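/- Let d ≥ 2 and let Δ be a nonzero traceless Hermitian matrix on C^d ⊗ C^d. Then there exist unitary d×d matrices U and V and a real number λ such that the matrix κ = (1/(d+1))·(U⊗V)|ψ₀⟩⟨ψ₀|(U⊗V)* + (1/(d(d+1)))·I + λΔ is a state, and its partial transpose κ^τ has a negative eigenvalue (i.e., κ^τ is not positive semidefinite). -/

import Mathlib

open Matrix
open Kronecker
open scoped ComplexOrder

noncomputable section

/-- A state (density matrix): positive semidefinite with trace 1. -/
def IsState {n : Type*} [Fintype n] (ρ : Matrix n n ℂ) : Prop :=
  ρ.PosSemidef ∧ ρ.trace = 1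

/-- Partial transpose with respect to the second tensor factor. -/
def ptrans {d : ℕ} (ρ : Matrix (Fin d × Fin d) (Fin d × Fin d) ℂ) :
    Matrix (Fin d × Fin d) (Fin d × Fin d) ℂ :=
  Matrix.of fun p q => ρ (p.1, q.2) (q.1, p.2)

/-- The canonical maximally entangled vector `ψ₀ = (1/√d) ∑ⱼ eⱼ ⊗ eⱼ`. -/
def psi0 (d : ℕ) : Fin d × Fin d → ℂ :=
  fun p => if p.1 = p.2 then (((Real.sqrt d)⁻¹ : ℝ) : ℂ) else 0

/-- The perturbed isotropic state
`κ = (1/(d+1))·(U⊗V)|ψ₀⟩⟨ψ₀|(U⊗V)* + (1/(d(d+1)))·I + λΔ`. -/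
def kappa0 {d : ℕ} (U V : Matrix (Fin d) (Fin d) ℂ) (lam : ℝ)
    (Δ : Matrix (Fin d × Fin d) (Fin d × Fin d) ℂ) :
    Matrix (Fin d × Fin d) (Fin d × Fin d) ℂ :=
  (((d : ℂ) + 1)⁻¹) • ((U ⊗ₖ V) * vecMulVec (psi0 d) (star (psi0 d)) * (U ⊗ₖ V)ᴴ)
    + (((d : ℂ) * ((d : ℂ) + 1))⁻¹) • (1 : Matrix (Fin d × Fin d) (Fin d × Fin d) ℂ)
    + (lam : ℂ) • Δ

/-! ### Auxiliary lemmas -/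

lemma ptrans_add {d : ℕ} (A B : Matrix (Fin d × Fin d) (Fin d × Fin d) ℂ) :
    ptrans (A + B) = ptrans A + ptrans B := by
  ext p q; simp [ptrans]

lemma ptrans_smul {d : ℕ} (c : ℂ) (A : Matrix (Fin d × Fin d) (Fin d × Fin d) ℂ) :
    ptrans (c • A) = c • ptrans A := by
  ext p q; simp [ptrans]

lemma ptrans_one {d : ℕ} : ptrans (1 : Matrix (Fin d × Fin d) (Fin d × Fin d) ℂ) = 1 := by
  ext ⟨i,k⟩ ⟨j,l⟩
  simp [ptrans, Matrix.one_apply, Prod.ext_iff, eq_comm]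

lemma kron_conjTranspose {d : ℕ} (A B : Matrix (Fin d) (Fin d) ℂ) :
    (A ⊗ₖ B)ᴴ = Aᴴ ⊗ₖ Bᴴ := by
  ext ⟨i,k⟩ ⟨j,l⟩
  simp [Matrix.conjTranspose_apply, Matrix.kroneckerMap_apply]

lemma mul_mul_apply'' {n : Type*} [Fintype n] (M X N : Matrix n n ℂ) (p q : n) :
    (M * X * N) p q = ∑ t, ∑ r, M p t * X t r * N r q := by
  rw [Matrix.mul_apply]
  simp only [Matrix.mul_apply, Finset.sum_mul]
  rw [Finset.sum_comm]

def eswap (d : ℕ) : ((Fin d × Fin d) × (Fin d × Fin d)) ≃ ((Fin d × Fin d) × (Fin d × Fin d)) where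
  toFun x := ((x.1.1, x.2.2), (x.2.1, x.1.2))
  invFun x := ((x.1.1, x.2.2), (x.2.1, x.1.2))
  left_inv _ := rfl
  right_inv _ := rfl

lemma ptrans_conj {d : ℕ} (A B : Matrix (Fin d) (Fin d) ℂ)
    (X : Matrix (Fin d × Fin d) (Fin d × Fin d) ℂ)
    (hB : ∀ i j, star (B i j) = B i j) :
    ptrans ((A ⊗ₖ B) * X * (A ⊗ₖ B)ᴴ) = (A ⊗ₖ B) * ptrans X * (A ⊗ₖ B)ᴴ := by
  ext ⟨i,k⟩ ⟨j,l⟩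
  have h1 : ptrans ((A ⊗ₖ B) * X * (A ⊗ₖ B)ᴴ) (i,k) (j,l)
      = ((A ⊗ₖ B) * X * (A ⊗ₖ B)ᴴ) (i,l) (j,k) := rfl
  rw [h1, mul_mul_apply'', mul_mul_apply'']
  rw [← Fintype.sum_prod_type', ← Fintype.sum_prod_type']
  refine Fintype.sum_equiv (eswap d) _ _ ?_
  rintro ⟨⟨t1,t2⟩,⟨r1,r2⟩⟩
  simp only [eswap, Equiv.coe_fn_mk, Matrix.kroneckerMap_apply, Matrix.conjTranspose_apply,
    ptrans, Matrix.of_apply, star_mul']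
  rw [hB, hB]
  ring

def swapMat (d : ℕ) : Matrix (Fin d × Fin d) (Fin d × Fin d) ℂ :=
  Matrix.of fun p q => if p.1 = q.2 ∧ q.1 = p.2 then 1 else 0

lemma ptrans_vecMulVec_psi0 {d : ℕ} (hd : 0 < d) :
    ptrans (vecMulVec (psi0 d) (star (psi0 d))) = (d : ℂ)⁻¹ • swapMat d := by
  ext ⟨i,k⟩ ⟨j,l⟩
  have h1 : ptrans (vecMulVec (psi0 d) (star (psi0 d))) (i,k) (j,l)
      = psi0 d (i, l) * star (psi0 d (j, k)) := rfl
  rw [h1]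
  simp only [psi0, swapMat, Matrix.smul_apply, Matrix.of_apply]
  by_cases h1 : i = l <;> by_cases h2 : j = k <;>
    simp [h1, h2, smul_eq_mul]
  rw [← Complex.ofReal_inv, ← Complex.ofReal_mul, ← Real.sqrt_inv,
    Real.mul_self_sqrt (by positivity), Complex.ofReal_inv, Complex.ofReal_natCast]

lemma swapMat_mulVec {d : ℕ} (x : Fin d × Fin d → ℂ) :
    swapMat d *ᵥ x = fun p => x (p.2, p.1) := by
  funext ⟨i,k⟩
  simp only [swapMat, Matrix.mulVec, dotProduct, Matrix.of_apply]
  rw [Fintype.sum_prod_type]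
  simp [ite_and]

def wv {d : ℕ} (a b c e : Fin d) (s : ℂ) : Fin d × Fin d → ℂ :=
  fun p => if p = (a, b) then 1 else if p = (c, e) then s else 0

lemma wv_split {d : ℕ} (a b c e : Fin d) (s : ℂ) (h : (a,b) ≠ (c,e)) :
    wv a b c e s = fun q => (if q = (a,b) then (1:ℂ) else 0) + (if q = (c,e) then s else 0) := by
  funext q
  by_cases h1 : q = (a,b)
  · subst h1
    rw [if_neg h]
    simp [wv]
  · by_cases h2 : q = (c,e)
    · subst h2
      have hne : ((c,e) : Fin d × Fin d) ≠ (a,b) := fun hh => h hh.symm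
      simp only [wv]
      rw [if_neg hne]; simp [hne]
    · simp [wv, h1, h2]

lemma mulVec_wv {d : ℕ} (M : Matrix (Fin d × Fin d) (Fin d × Fin d) ℂ)
    (a b c e : Fin d) (s : ℂ) (h : (a,b) ≠ (c,e)) (p : Fin d × Fin d) :
    (M *ᵥ wv a b c e s) p = M p (a,b) + s * M p (c,e) := by
  rw [wv_split a b c e s h]
  simp only [Matrix.mulVec, dotProduct, mul_add, Finset.sum_add_distrib,
    mul_ite, mul_one, mul_zero, Finset.sum_ite_eq' Finset.univ, Finset.mem_univ, if_true]
  ring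

lemma swap_wv {d : ℕ} (i0 i1 : Fin d) (hi : i0 ≠ i1) :
    swapMat d *ᵥ wv i0 i1 i1 i0 (-1) = -(wv i0 i1 i1 i0 (-1)) := by
  rw [swapMat_mulVec]
  funext ⟨p1, p2⟩
  simp only [wv, Pi.neg_apply, Prod.mk.injEq]
  by_cases h1 : p1 = i0 <;> by_cases h2 : p2 = i1 <;> by_cases h3 : p1 = i1 <;>
    by_cases h4 : p2 = i0 <;> simp_all [Prod.ext_iff] <;> simp_all [eq_comm]

lemma perm_sign_unitary {d : ℕ} (π : Equiv.Perm (Fin d)) (dd : Fin d → ℂ)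
    (hdd : ∀ q, dd q * star (dd q) = 1) :
    (Matrix.of fun p q => if p = π q then dd q else 0) ∈ Matrix.unitaryGroup (Fin d) ℂ := by
  rw [Matrix.mem_unitaryGroup_iff]
  ext p q
  rw [Matrix.star_eq_conjTranspose, Matrix.mul_apply]
  have key : ∀ r, (Matrix.of fun p q => if p = π q then dd q else 0) p r *
      ((Matrix.of fun p q => if p = π q then dd q else 0)ᴴ) r q
      = if r = π.symm p then (if p = q then 1 else 0) else 0 := by
    intro r
    simp only [Matrix.of_apply, Matrix.conjTranspose_apply]
    by_cases h1 : r = π.symm p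
    · subst h1
      by_cases h2 : p = q
      · subst h2
        simp only [Equiv.apply_symm_apply, if_pos rfl]
        simpa using hdd (π.symm p)
      · have hq : ¬ q = π ((Equiv.symm π) p) := by simpa [eq_comm] using h2
        rw [if_neg hq, star_zero, mul_zero, if_neg h2]; simp
    · have hp : ¬ p = π r := fun h => h1 (by rw [h]; simp)
      simp [hp, h1]
  rw [Finset.sum_congr rfl (fun r _ => key r), Finset.sum_ite_eq' _ (π.symm p)]
  simp [Matrix.one_apply]

lemma exists_perm_two {d : ℕ} (i0 i1 a c : Fin d) (hi : i0 ≠ i1) (hac : a ≠ c) :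
    ∃ π : Equiv.Perm (Fin d), π i0 = a ∧ π i1 = c := by
  refine ⟨(Equiv.swap i1 (Equiv.swap i0 a c)).trans (Equiv.swap i0 a), ?_, ?_⟩
  · have h1 : i0 ≠ Equiv.swap i0 a c := by
      intro h
      apply hac
      have := congrArg (Equiv.swap i0 a) h
      simpa using this
    simp [Equiv.trans_apply, Equiv.swap_apply_of_ne_of_ne hi h1]
  · simp [Equiv.trans_apply]

lemma construct {d : ℕ} (i0 i1 a c b e : Fin d) (hi : i0 ≠ i1) (hac : a ≠ c) (hbe : b ≠ e)
    (s : ℝ) (hs : s = 1 ∨ s = -1) :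
    ∃ U V : Matrix (Fin d) (Fin d) ℂ, U ∈ Matrix.unitaryGroup (Fin d) ℂ ∧
      V ∈ Matrix.unitaryGroup (Fin d) ℂ ∧ (∀ i j, star (V i j) = V i j) ∧
      (U ⊗ₖ V) *ᵥ wv i0 i1 i1 i0 (-1) = wv a b c e (s : ℂ) := by
  obtain ⟨π, hπ0, hπ1⟩ := exists_perm_two i0 i1 a c hi hac
  obtain ⟨ρ, hρ0, hρ1⟩ := exists_perm_two i0 i1 e b hi (Ne.symm hbe)
  set dd : Fin d → ℂ := fun q => if q = i0 then -(s:ℂ) else 1 with hdd_def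
  have hdd : ∀ q, dd q * star (dd q) = 1 := by
    intro q
    by_cases h : q = i0 <;>
      rcases hs with hs | hs <;>
      simp [hdd_def, h, hs]
  refine ⟨Matrix.of fun p q => if p = π q then 1 else 0,
    Matrix.of fun p q => if p = ρ q then dd q else 0,
    by simpa using perm_sign_unitary π (fun _ => 1) (by simp),
    perm_sign_unitary ρ dd hdd, ?_, ?_⟩
  · intro i j
    by_cases h1 : i = ρ j
    · by_cases h2 : j = i0 <;> rcases hs with hs | hs <;>
        simp [h1, h2, hdd_def, hs]
    · simp [h1]
  · funext p
    rw [mulVec_wv _ i0 i1 i1 i0 (-1) (by simp [Prod.ext_iff, hi]) p]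
    obtain ⟨p1, p2⟩ := p
    have hd1 : dd i1 = 1 := if_neg (Ne.symm hi)
    have hd0 : dd i0 = -(s:ℂ) := if_pos rfl
    simp only [Matrix.kroneckerMap_apply, Matrix.of_apply, hπ0, hπ1, hρ0, hρ1, hd1, hd0, wv]
    by_cases h1 : p1 = a <;> by_cases h2 : p2 = b <;> by_cases h3 : p1 = c <;>
      by_cases h4 : p2 = e <;> simp_all [Prod.ext_iff] <;> ring

lemma herm_quad_real {n : Type*} [Fintype n] {A : Matrix n n ℂ} (hA : A.IsHermitian)
    (y : n → ℂ) : (star y ⬝ᵥ (A *ᵥ y)).im = 0 := by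
  have h : star (star y ⬝ᵥ (A *ᵥ y)) = star y ⬝ᵥ (A *ᵥ y) := by
    conv_lhs => rw [star_dotProduct, star_star]
    rw [Matrix.star_mulVec, ← Matrix.dotProduct_mulVec, hA.eq]
  have := congrArg Complex.im h
  simp only [Complex.star_def, Complex.conj_im] at this
  linarith

lemma quad_bound {n : Type*} [Fintype n] (Δ : Matrix n n ℂ) (y : n → ℂ) :
    |(star y ⬝ᵥ (Δ *ᵥ y)).re| ≤ (∑ p, ∑ q, ‖Δ p q‖) * (∑ p, Complex.normSq (y p)) := by
  set N := ∑ p, Complex.normSq (y p) with hN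
  have hNnn : 0 ≤ N := Finset.sum_nonneg fun p _ => Complex.normSq_nonneg _
  have habs : ∀ p q : n, ‖y p‖ * ‖y q‖ ≤ N := by
    intro p q
    have h1 : ‖y p‖ ^ 2 ≤ N := by
      rw [Complex.sq_norm]
      exact Finset.single_le_sum (fun i _ => Complex.normSq_nonneg (y i)) (Finset.mem_univ p)
    have h2 : ‖y q‖ ^ 2 ≤ N := by
      rw [Complex.sq_norm]
      exact Finset.single_le_sum (fun i _ => Complex.normSq_nonneg (y i)) (Finset.mem_univ q)
    nlinarith [norm_nonneg (y p), norm_nonneg (y q)]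
  have hz : star y ⬝ᵥ (Δ *ᵥ y) = ∑ p, ∑ q, star (y p) * Δ p q * y q := by
    simp only [dotProduct, Matrix.mulVec, Pi.star_apply, Finset.mul_sum, mul_assoc]
  rw [hz]
  calc |(∑ p, ∑ q, star (y p) * Δ p q * y q).re|
      ≤ ‖∑ p, ∑ q, star (y p) * Δ p q * y q‖ := Complex.abs_re_le_norm _
    _ ≤ ∑ p, ‖∑ q, star (y p) * Δ p q * y q‖ := norm_sum_le _ _
    _ ≤ ∑ p, ∑ q, ‖star (y p) * Δ p q * y q‖ :=
        Finset.sum_le_sum fun p _ => norm_sum_le _ _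
    _ ≤ ∑ p, ∑ q, ‖Δ p q‖ * N := by
        refine Finset.sum_le_sum fun p _ => Finset.sum_le_sum fun q _ => ?_
        rw [norm_mul, norm_mul,
          Complex.star_def, Complex.norm_conj]
        calc ‖y p‖ * ‖Δ p q‖ * ‖y q‖
            = ‖Δ p q‖ * (‖y p‖ * ‖y q‖) := by ring
          _ ≤ ‖Δ p q‖ * N :=
              mul_le_mul_of_nonneg_left (habs p q) (norm_nonneg _)
    _ = (∑ p, ∑ q, ‖Δ p q‖) * N := by simp [Finset.sum_mul]

lemma dot_star_self {n : Type*} [Fintype n] (x : n → ℂ) :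
    star x ⬝ᵥ x = ((∑ p, Complex.normSq (x p) : ℝ) : ℂ) := by
  rw [Complex.ofReal_sum]
  simp only [dotProduct, Pi.star_apply, Complex.star_def]
  congr 1
  funext p
  rw [Complex.normSq_eq_conj_mul_self]

lemma pert_posSemidef {n : Type*} [Fintype n] [DecidableEq n] (Δ : Matrix n n ℂ)
    (hΔH : Δ.IsHermitian) (c lam : ℝ)
    (hsmall : |lam| * (∑ p, ∑ q, ‖Δ p q‖) ≤ c) :
    (((c:ℝ):ℂ) • (1 : Matrix n n ℂ) + ((lam:ℝ):ℂ) • Δ).PosSemidef := by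
  rw [Matrix.posSemidef_iff_dotProduct_mulVec]
  constructor
  · show _ᴴ = _
    simp [Matrix.conjTranspose_add, Matrix.conjTranspose_smul, Complex.star_def,
      Complex.conj_ofReal, hΔH.eq]
  · intro x
    rw [Matrix.add_mulVec, Matrix.smul_mulVec, Matrix.smul_mulVec,
      Matrix.one_mulVec, dotProduct_add, dotProduct_smul,
      dotProduct_smul, dot_star_self]
    set q := star x ⬝ᵥ (Δ *ᵥ x) with hq
    set N := ∑ p, Complex.normSq (x p) with hN
    have hNnn : 0 ≤ N := Finset.sum_nonneg fun p _ => Complex.normSq_nonneg _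
    have him : q.im = 0 := herm_quad_real hΔH x
    have hreb := quad_bound Δ x
    rw [← hq, ← hN] at hreb
    set Cap := ∑ p, ∑ q, ‖Δ p q‖ with hCap
    rw [Complex.nonneg_iff]
    constructor
    · simp only [smul_eq_mul, Complex.add_re, Complex.mul_re, Complex.ofReal_re,
        Complex.ofReal_im, him, zero_mul, sub_zero, mul_zero]
      have h1 : |lam * q.re| ≤ |lam| * (Cap * N) := by
        rw [abs_mul]
        exact mul_le_mul_of_nonneg_left hreb (abs_nonneg lam)
      nlinarith [neg_abs_le (lam * q.re), mul_le_mul_of_nonneg_right hsmall hNnn]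
    · simp [smul_eq_mul, Complex.add_im, Complex.mul_im, Complex.ofReal_re,
        Complex.ofReal_im, him]

lemma trace_P {d : ℕ} (hd : 0 < d) :
    Matrix.trace (vecMulVec (psi0 d) (star (psi0 d))) = 1 := by
  have hdc : (d:ℂ) ≠ 0 := Nat.cast_ne_zero.mpr hd.ne'
  rw [Matrix.trace]
  have key : ∀ p : Fin d × Fin d, Matrix.diag (vecMulVec (psi0 d) (star (psi0 d))) p
      = if p.1 = p.2 then (d:ℂ)⁻¹ else 0 := by
    rintro ⟨p1, p2⟩
    simp only [Matrix.diag, vecMulVec_apply, Pi.star_apply, psi0]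
    by_cases h : p1 = p2
    · simp only [h, if_pos rfl, if_true, eq_self_iff_true]
      rw [Complex.star_def, Complex.conj_ofReal, ← Complex.ofReal_mul,
        ← Real.sqrt_inv, Real.mul_self_sqrt (by positivity), Complex.ofReal_inv,
        Complex.ofReal_natCast]
    · simp [h]
  rw [Finset.sum_congr rfl (fun p _ => key p)]
  rw [Fintype.sum_prod_type]
  simp [Finset.sum_ite_eq, mul_inv_cancel₀ hdc]

lemma P_posSemidef {d : ℕ} :
    (vecMulVec (psi0 d) (star (psi0 d))).PosSemidef := by
  have h : vecMulVec (psi0 d) (star (psi0 d))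
      = Matrix.replicateCol (Fin 1) (psi0 d) * (Matrix.replicateCol (Fin 1) (psi0 d))ᴴ := by
    rw [Matrix.conjTranspose_replicateCol, Matrix.vecMulVec_eq (Fin 1)]
    rfl
  rw [h]
  exact Matrix.posSemidef_self_mul_conjTranspose _

lemma posSemidef_smul' {n : Type*} [Fintype n] {M : Matrix n n ℂ} (hM : M.PosSemidef)
    {a : ℂ} (ha : 0 ≤ a) : (a • M).PosSemidef := by
  rw [Matrix.posSemidef_iff_dotProduct_mulVec]
  constructor
  · have hsa : star a = a := by
      rw [Complex.star_def, Complex.conj_eq_iff_im]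
      exact (Complex.nonneg_iff.mp ha).2.symm
    rw [Matrix.IsHermitian, Matrix.conjTranspose_smul, hsa, hM.1.eq]
  · intro x
    rw [Matrix.smul_mulVec, dotProduct_smul, smul_eq_mul]
    exact mul_nonneg ha (hM.dotProduct_mulVec_nonneg x)

theorem stmt0 (d : ℕ) (hd : 2 ≤ d)
    (Δ : Matrix (Fin d × Fin d) (Fin d × Fin d) ℂ)
    (hΔ0 : Δ ≠ 0) (hΔH : Δ.IsHermitian) (hΔtr : Δ.trace = 0) :
    ∃ (U V : Matrix (Fin d) (Fin d) ℂ), U ∈ Matrix.unitaryGroup (Fin d) ℂ ∧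
      V ∈ Matrix.unitaryGroup (Fin d) ℂ ∧ ∃ lam : ℝ,
        IsState (kappa0 U V lam Δ) ∧ ¬ (ptrans (kappa0 U V lam Δ)).PosSemidef := by
  have hd0 : 0 < d := by omega
  have hdc : (d:ℂ) ≠ 0 := Nat.cast_ne_zero.mpr hd0.ne'
  have hd1c : (d:ℂ) + 1 ≠ 0 := by
    have : ((d:ℂ) + 1) = ((d+1 : ℕ) : ℂ) := by push_cast; ring
    rw [this]
    exact Nat.cast_ne_zero.mpr (by omega)
  have hi : (⟨0, by omega⟩ : Fin d) ≠ ⟨1, by omega⟩ := by simp [Fin.ext_iff]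
  set i0 : Fin d := ⟨0, by omega⟩
  set i1 : Fin d := ⟨1, by omega⟩
  set M := ptrans Δ with hMdef
  obtain ⟨p₀, q₀, hM0⟩ : ∃ p q, M p q ≠ 0 := by
    by_contra h
    push_neg at h
    apply hΔ0
    ext p q
    have := h (p.1, q.2) (q.1, p.2)
    simpa [hMdef, ptrans] using this
  obtain ⟨a, b, c, e, hac, hbe, hq0⟩ :
      ∃ a b c e : Fin d, a ≠ c ∧ b ≠ e ∧ (a, b) = q₀ := by
    obtain ⟨q1, q2⟩ := q₀
    by_cases h : q1 = q2
    · subst h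
      refine ⟨q1, q1, if q1 = i0 then i1 else i0, if q1 = i0 then i1 else i0, ?_, ?_, rfl⟩ <;>
      · by_cases hh : q1 = i0
        · simpa [hh] using hi
        · simpa [hh] using hh
    · exact ⟨q1, q2, q2, q1, h, fun hh => h hh.symm, rfl⟩
  have habce : ((a,b) : Fin d × Fin d) ≠ (c,e) := fun hh => hac (congrArg Prod.fst hh)
  have hwex : ∃ s : ℝ, (s = 1 ∨ s = -1) ∧ M *ᵥ wv a b c e (s:ℂ) ≠ 0 := by
    by_contra h
    push_neg at h
    have h1 := congrFun (h 1 (Or.inl rfl)) p₀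
    have h2 := congrFun (h (-1) (Or.inr rfl)) p₀
    simp only [Pi.zero_apply] at h1 h2
    rw [mulVec_wv M a b c e _ habce p₀] at h1 h2
    apply hM0
    rw [← hq0]
    push_cast at h1 h2
    have : (2 : ℂ) * M p₀ (a, b) = 0 := by linear_combination h1 + h2
    simpa using this
  obtain ⟨s, hs, hMw⟩ := hwex
  obtain ⟨U, V, hU, hV, hVreal, hUVw⟩ := construct i0 i1 a c b e hi hac hbe s hs
  refine ⟨U, V, hU, hV, ?_⟩
  set Cap := ∑ p, ∑ q, ‖Δ p q‖ with hCap
  have hCapnn : 0 ≤ Cap := Finset.sum_nonneg fun p _ =>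
    Finset.sum_nonneg fun r _ => norm_nonneg _
  set creal : ℝ := ((d:ℝ) * ((d:ℝ)+1))⁻¹ with hcreal
  have hdr0 : (0:ℝ) < d := by exact_mod_cast hd0
  have hcpos : 0 < creal := by rw [hcreal]; positivity
  set ε : ℝ := creal / (Cap + 1) with hε
  have hεpos : 0 < ε := by rw [hε]; positivity
  set w := wv a b c e (s:ℂ) with hw
  set μ := star w ⬝ᵥ (M *ᵥ w) with hμ
  set lam := if 0 < μ.re then -ε else ε with hlam
  clear_value M Cap creal ε w μ lam
  have hlamabs : |lam| = ε := by
    rw [hlam]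
    split_ifs <;> simp [abs_of_pos hεpos]
  have hlamne : lam ≠ 0 := by
    rw [hlam]; split_ifs <;> simp [hεpos.ne', hεpos.ne]
  have hsmall : |lam| * Cap ≤ creal := by
    rw [hlamabs, hε]
    rw [div_mul_eq_mul_div, div_le_iff₀ (by positivity)]
    nlinarith
  have hccast : ((d:ℂ) * ((d:ℂ)+1))⁻¹ = ((creal : ℝ) : ℂ) := by
    rw [hcreal]; push_cast; ring
  have hBB : (U ⊗ₖ V)ᴴ * (U ⊗ₖ V) = 1 := by
    rw [kron_conjTranspose, ← Matrix.mul_kronecker_mul,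
      ← Matrix.star_eq_conjTranspose U, ← Matrix.star_eq_conjTranspose V,
      Matrix.mem_unitaryGroup_iff'.mp hU, Matrix.mem_unitaryGroup_iff'.mp hV]
    exact Matrix.one_kronecker_one
  refine ⟨lam, ⟨?_, ?_⟩, ?_⟩
  · -- PosSemidef of kappa0
    rw [kappa0, add_assoc]
    apply Matrix.PosSemidef.add
    · refine posSemidef_smul' (Matrix.PosSemidef.mul_mul_conjTranspose_same P_posSemidef _) ?_
      have h : ((d:ℂ)+1)⁻¹ = ((((d:ℝ)+1)⁻¹ : ℝ) : ℂ) := by push_cast; ring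
      rw [h, Complex.zero_le_real]
      positivity
    · rw [hccast]
      exact pert_posSemidef Δ hΔH creal lam (by rw [← hCap]; exact hsmall)
  · -- trace
    rw [kappa0, Matrix.trace_add, Matrix.trace_add, Matrix.trace_smul, Matrix.trace_smul,
      Matrix.trace_smul, hΔtr, Matrix.trace_mul_cycle, hBB,
      Matrix.one_mul, trace_P hd0, Matrix.trace_one]
    simp only [smul_eq_mul, mul_one, smul_zero, add_zero, Fintype.card_prod, Fintype.card_fin]
    field_simp
    push_cast
    ring
  · -- not PosSemidef of the partial transpose
    intro hPSD
    have hpt : ptrans (kappa0 U V lam Δ)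
        = (((d:ℂ)+1)⁻¹ • ((U ⊗ₖ V) * ((d:ℂ)⁻¹ • swapMat d) * (U ⊗ₖ V)ᴴ))
          + ((d:ℂ) * ((d:ℂ)+1))⁻¹ • (1 : Matrix (Fin d × Fin d) (Fin d × Fin d) ℂ)
          + (lam : ℂ) • M := by
      rw [kappa0, ptrans_add, ptrans_add, ptrans_smul, ptrans_smul, ptrans_smul, ptrans_one,
        ptrans_conj U V _ hVreal, ptrans_vecMulVec_psi0 hd0, hMdef]
    have hWact : ptrans (kappa0 U V lam Δ) *ᵥ w = (lam:ℂ) • (M *ᵥ w) := by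
      rw [hpt, Matrix.add_mulVec, Matrix.add_mulVec, Matrix.smul_mulVec,
        Matrix.smul_mulVec, Matrix.smul_mulVec, Matrix.one_mulVec]
      have hw2 : (U ⊗ₖ V)ᴴ *ᵥ w = wv i0 i1 i1 i0 (-1) := by
        rw [← hUVw, Matrix.mulVec_mulVec, hBB, Matrix.one_mulVec]
      have hone : ((U ⊗ₖ V) * ((d:ℂ)⁻¹ • swapMat d) * (U ⊗ₖ V)ᴴ) *ᵥ w
          = (-(d:ℂ)⁻¹) • w := by
        rw [← Matrix.mulVec_mulVec, ← Matrix.mulVec_mulVec, hw2,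
          Matrix.smul_mulVec, swap_wv i0 i1 hi]
        rw [← hUVw]
        rw [smul_neg, Matrix.mulVec_neg, Matrix.mulVec_smul, ← neg_smul]
      rw [hone, smul_smul]
      have hcancel : ((d:ℂ)+1)⁻¹ * (-(d:ℂ)⁻¹) = -(((d:ℂ) * ((d:ℂ)+1))⁻¹) := by
        field_simp
      rw [hcancel, neg_smul, neg_add_cancel, zero_add]
    have hquad := hPSD.dotProduct_mulVec_nonneg w
    rw [hWact, dotProduct_smul, ← hμ] at hquad
    have hre : ((lam:ℂ) • μ).re = lam * μ.re := by
      simp [smul_eq_mul, Complex.mul_re]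
    have him : ((lam:ℂ) • μ).im = lam * μ.im := by
      simp [smul_eq_mul, Complex.mul_im]
    rw [Complex.nonneg_iff, hre, him] at hquad
    by_cases hgt : 0 < μ.re
    · have hlamval : lam = -ε := by rw [hlam, if_pos hgt]
      nlinarith [hquad.1]
    · by_cases hlt : μ.re < 0
      · have hlamval : lam = ε := by rw [hlam, if_neg hgt]
        nlinarith [hquad.1]
      · have hre0 : μ.re = 0 := le_antisymm (not_lt.mp hgt) (not_lt.mp hlt)
        have him0 : μ.im = 0 := by
          rcases mul_eq_zero.mp hquad.2.symm with h | h
          · exact absurd h hlamne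
          · exact h
        have hμ0 : μ = 0 := Complex.ext hre0 him0
        have hz : star w ⬝ᵥ (ptrans (kappa0 U V lam Δ) *ᵥ w) = 0 := by
          rw [hWact, dotProduct_smul, ← hμ, hμ0, smul_zero]
        have hzero := (hPSD.dotProduct_mulVec_zero_iff w).mp hz
        rw [hWact] at hzero
        have : M *ᵥ w = 0 := by
          have hlc : (lam : ℂ) ≠ 0 := by exact_mod_cast hlamne
          exact (smul_eq_zero.mp hzero).resolve_left hlc
        exact hMw this
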